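/- For every natural number l and every positive integer n, R_{A_{l+1}}(n) = R_{A_l}(n) + |{(a, a') : a ∈ A_l, a' ∈ B_l, a + a' = n − 2^l}| + R_{B_l}(n − 2^{l+1}), and R_{B_{l+1}}(n) = R_{B_l}(n) + |{(a, a') : a ∈ B_l, a' ∈ A_l, a + a' = n − 2^l}| + R_{A_l}(n − 2^{l+1}) (where terms with a negative argument are taken to be 0). -/

import Mathlib

/-- `R S n` is the number of unordered representations of `n` as `s + s'`
with `s, s' ∈ S` and `s < s'`. -/
noncomputable def R (S : Set ℕ) (n : ℕ) : ℕ :=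
  {p : ℕ × ℕ | p.1 ∈ S ∧ p.2 ∈ S ∧ p.1 < p.2 ∧ p.1 + p.2 = n}.ncard

/-- The Thue–Morse set: nonnegative integers with an even number of
`1` digits in binary. -/
def A : Set ℕ := {n | Even ((Nat.digits 2 n).sum)}

/-- The complement of the Thue–Morse set. -/
def B : Set ℕ := Aᶜ

/-- `Af l = A ∩ [0, 2^l − 1]`. -/
def Af (l : ℕ) : Set ℕ := A ∩ Set.Iic (2 ^ l - 1)

/-- `Bf l = B ∩ [0, 2^l − 1]`. -/
def Bf (l : ℕ) : Set ℕ := B ∩ Set.Iic (2 ^ l - 1)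

lemma sum_digits_pow_add {l b : ℕ} (hb : b < 2 ^ l) :
    (Nat.digits 2 (2 ^ l + b)).sum = (Nat.digits 2 b).sum + 1 := by
  have hlen : (Nat.digits 2 b).length ≤ l := by
    rcases Nat.eq_zero_or_pos b with rfl | hbpos
    · simp
    · rw [Nat.digits_len 2 b one_lt_two hbpos.ne']
      exact Nat.log_lt_of_lt_pow hbpos.ne' hb
  have key := Nat.digits_append_zeroes_append_digits
    (b := 2) (k := l - (Nat.digits 2 b).length) (m := 1) (n := b) one_lt_two one_pos
  rw [Nat.add_sub_cancel' hlen] at key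
  have : b + 2 ^ l * 1 = 2 ^ l + b := by ring
  rw [this] at key
  calc (Nat.digits 2 (2 ^ l + b)).sum
      = (Nat.digits 2 b ++ List.replicate (l - (Nat.digits 2 b).length) 0
          ++ Nat.digits 2 1).sum := by rw [key]
    _ = (Nat.digits 2 b).sum + 1 := by simp

lemma mem_Iic_iff {k m : ℕ} : m ∈ Set.Iic (2 ^ k - 1) ↔ m < 2 ^ k := by
  simp [Set.mem_Iic, Nat.le_sub_one_iff_lt (Nat.two_pow_pos k)]

lemma Af_succ (l : ℕ) : Af (l + 1) = Af l ∪ (fun b => 2 ^ l + b) '' Bf l := by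
  ext m
  simp only [Af, Bf, Set.mem_inter_iff, Set.mem_union, Set.mem_image, mem_Iic_iff]
  constructor
  · rintro ⟨hA, hm⟩
    rcases lt_or_ge m (2 ^ l) with h | h
    · exact Or.inl ⟨hA, h⟩
    · right
      refine ⟨m - 2 ^ l, ⟨?_, ?_⟩, by omega⟩
      · have hb : m - 2 ^ l < 2 ^ l := by
          have : 2 ^ (l + 1) = 2 ^ l + 2 ^ l := by ring
          omega
        have hs := sum_digits_pow_add hb
        have hm' : 2 ^ l + (m - 2 ^ l) = m := by omega
        rw [hm'] at hs
        simp only [A, B, Set.mem_compl_iff, Set.mem_setOf_eq] at hA ⊢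
        rw [hs] at hA
        simpa [Nat.even_add_one] using hA
      · have : 2 ^ (l + 1) = 2 ^ l + 2 ^ l := by ring
        omega
  · rintro (⟨hA, hm⟩ | ⟨b, ⟨hbB, hb⟩, rfl⟩)
    · refine ⟨hA, ?_⟩
      have : 2 ^ l ≤ 2 ^ (l + 1) := Nat.pow_le_pow_right (by norm_num) (by omega)
      omega
    · refine ⟨?_, ?_⟩
      · have hs := sum_digits_pow_add hb
        simp only [A, B, Set.mem_compl_iff, Set.mem_setOf_eq] at hbB ⊢
        rw [hs]
        simpa [Nat.even_add_one] using hbB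
      · have : 2 ^ (l + 1) = 2 ^ l + 2 ^ l := by ring
        omega

lemma Bf_succ (l : ℕ) : Bf (l + 1) = Bf l ∪ (fun b => 2 ^ l + b) '' Af l := by
  ext m
  simp only [Af, Bf, Set.mem_inter_iff, Set.mem_union, Set.mem_image, mem_Iic_iff]
  constructor
  · rintro ⟨hB, hm⟩
    rcases lt_or_ge m (2 ^ l) with h | h
    · exact Or.inl ⟨hB, h⟩
    · right
      refine ⟨m - 2 ^ l, ⟨?_, ?_⟩, by omega⟩
      · have hb : m - 2 ^ l < 2 ^ l := by
          have : 2 ^ (l + 1) = 2 ^ l + 2 ^ l := by ring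
          omega
        have hs := sum_digits_pow_add hb
        have hm' : 2 ^ l + (m - 2 ^ l) = m := by omega
        rw [hm'] at hs
        simp only [A, B, Set.mem_compl_iff, Set.mem_setOf_eq] at hB ⊢
        rw [hs] at hB
        simpa [Nat.even_add_one] using hB
      · have : 2 ^ (l + 1) = 2 ^ l + 2 ^ l := by ring
        omega
  · rintro (⟨hB, hm⟩ | ⟨b, ⟨hbA, hb⟩, rfl⟩)
    · refine ⟨hB, ?_⟩
      have : 2 ^ l ≤ 2 ^ (l + 1) := Nat.pow_le_pow_right (by norm_num) (by omega)
      omega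
    · refine ⟨?_, ?_⟩
      · have hs := sum_digits_pow_add hb
        simp only [A, B, Set.mem_compl_iff, Set.mem_setOf_eq] at hbA ⊢
        rw [hs]
        simpa [Nat.even_add_one] using hbA
      · have : 2 ^ (l + 1) = 2 ^ l + 2 ^ l := by ring
        omega

lemma key_count (l n : ℕ) (X Y : Set ℕ)
    (hX : X ⊆ Set.Iic (2 ^ l - 1)) (hY : Y ⊆ Set.Iic (2 ^ l - 1)) :
    R (X ∪ (fun b => 2 ^ l + b) '' Y) n =
      R X n +
        {p : ℕ × ℕ | p.1 ∈ X ∧ p.2 ∈ Y ∧ 2 ^ l + (p.1 + p.2) = n}.ncard +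
        {p : ℕ × ℕ | p.1 ∈ Y ∧ p.2 ∈ Y ∧ p.1 < p.2 ∧
          2 ^ (l + 1) + (p.1 + p.2) = n}.ncard := by
  have hX' : ∀ x ∈ X, x < 2 ^ l := fun x hx => mem_Iic_iff.mp (hX hx)
  have hY' : ∀ y ∈ Y, y < 2 ^ l := fun y hy => mem_Iic_iff.mp (hY hy)
  set Z := (fun b => 2 ^ l + b) '' Y with hZ
  have hZge : ∀ z ∈ Z, 2 ^ l ≤ z := by rintro z ⟨b, _, rfl⟩; dsimp only; omega
  set S1 : Set (ℕ × ℕ) := {p | p.1 ∈ X ∧ p.2 ∈ X ∧ p.1 < p.2 ∧ p.1 + p.2 = n} with hS1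
  set S2 : Set (ℕ × ℕ) := {p | p.1 ∈ X ∧ p.2 ∈ Z ∧ p.1 + p.2 = n} with hS2
  set S3 : Set (ℕ × ℕ) := {p | p.1 ∈ Z ∧ p.2 ∈ Z ∧ p.1 < p.2 ∧ p.1 + p.2 = n} with hS3
  have hsplit : {p : ℕ × ℕ | p.1 ∈ X ∪ Z ∧ p.2 ∈ X ∪ Z ∧ p.1 < p.2 ∧ p.1 + p.2 = n}
      = S1 ∪ S2 ∪ S3 := by
    ext ⟨a, b⟩
    simp only [hS1, hS2, hS3, Set.mem_union, Set.mem_setOf_eq]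
    constructor
    · rintro ⟨(h1 | h1), (h2 | h2), hlt, hsum⟩
      · exact Or.inl (Or.inl ⟨h1, h2, hlt, hsum⟩)
      · exact Or.inl (Or.inr ⟨h1, h2, hsum⟩)
      · have := hZge a h1; have := hX' b h2; omega
      · exact Or.inr ⟨h1, h2, hlt, hsum⟩
    · rintro (⟨⟨h1, h2, hlt, hsum⟩ | ⟨h1, h2, hsum⟩⟩ | ⟨h1, h2, hlt, hsum⟩)
      · exact ⟨Or.inl h1, Or.inl h2, hlt, hsum⟩
      · have := hX' a h1; have := hZge b h2
        exact ⟨Or.inl h1, Or.inr h2, by omega, hsum⟩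
      · exact ⟨Or.inr h1, Or.inr h2, hlt, hsum⟩
  have hbound : ∀ T : Set (ℕ × ℕ), (∀ p ∈ T, p.1 + p.2 = n) → T.Finite := by
    intro T hT
    apply Set.Finite.subset ((Set.finite_Iic n).prod (Set.finite_Iic n))
    rintro ⟨a, b⟩ hab
    have := hT _ hab
    exact ⟨by simp; omega, by simp; omega⟩
  have hf1 : S1.Finite := hbound _ (fun p hp => hp.2.2.2)
  have hf2 : S2.Finite := hbound _ (fun p hp => hp.2.2)
  have hf3 : S3.Finite := hbound _ (fun p hp => hp.2.2.2)
  have hd12 : Disjoint S1 S2 := by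
    rw [Set.disjoint_left]
    rintro ⟨a, b⟩ h1 h2
    have := hX' b h1.2.1; have := hZge b h2.2.1; omega
  have hd13 : Disjoint (S1 ∪ S2) S3 := by
    rw [Set.disjoint_left]
    rintro ⟨a, b⟩ h1 h3
    have := hZge a h3.1
    rcases h1 with h1 | h1
    · have := hX' a h1.1; omega
    · have := hX' a h1.1; omega
  have hcard : (S1 ∪ S2 ∪ S3).ncard = S1.ncard + S2.ncard + S3.ncard := by
    rw [Set.ncard_union_eq hd13 (hf1.union hf2) hf3,
        Set.ncard_union_eq hd12 hf1 hf2]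
  have hS2card : S2.ncard
      = {p : ℕ × ℕ | p.1 ∈ X ∧ p.2 ∈ Y ∧ 2 ^ l + (p.1 + p.2) = n}.ncard := by
    have himg : S2 = (fun p : ℕ × ℕ => (p.1, 2 ^ l + p.2)) ''
        {p : ℕ × ℕ | p.1 ∈ X ∧ p.2 ∈ Y ∧ 2 ^ l + (p.1 + p.2) = n} := by
      ext ⟨a, b⟩
      simp only [hS2, Set.mem_setOf_eq, Set.mem_image, Prod.mk.injEq, Prod.exists]
      constructor
      · rintro ⟨haX, ⟨c, hcY, rfl⟩, hsum⟩
        dsimp only at hsum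
        exact ⟨a, c, ⟨haX, hcY, by omega⟩, rfl, rfl⟩
      · rintro ⟨x, y, ⟨hxX, hyY, hsum⟩, rfl, rfl⟩
        exact ⟨hxX, ⟨y, hyY, rfl⟩, by omega⟩
    rw [himg]
    apply Set.ncard_image_of_injective
    intro p q h
    simp only [Prod.mk.injEq] at h
    exact Prod.ext h.1 (by omega)
  have hS3card : S3.ncard
      = {p : ℕ × ℕ | p.1 ∈ Y ∧ p.2 ∈ Y ∧ p.1 < p.2 ∧
          2 ^ (l + 1) + (p.1 + p.2) = n}.ncard := by
    have himg : S3 = (fun p : ℕ × ℕ => (2 ^ l + p.1, 2 ^ l + p.2)) ''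
        {p : ℕ × ℕ | p.1 ∈ Y ∧ p.2 ∈ Y ∧ p.1 < p.2 ∧ 2 ^ (l + 1) + (p.1 + p.2) = n} := by
      have h2 : 2 ^ (l + 1) = 2 ^ l + 2 ^ l := by ring
      ext ⟨a, b⟩
      simp only [hS3, Set.mem_setOf_eq, Set.mem_image, Prod.mk.injEq, Prod.exists]
      constructor
      · rintro ⟨⟨c, hcY, rfl⟩, ⟨d, hdY, rfl⟩, hlt, hsum⟩
        dsimp only at hlt hsum
        exact ⟨c, d, ⟨hcY, hdY, by omega, by omega⟩, rfl, rfl⟩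
      · rintro ⟨x, y, ⟨hxY, hyY, hlt, hsum⟩, rfl, rfl⟩
        exact ⟨⟨x, hxY, rfl⟩, ⟨y, hyY, rfl⟩, by omega, by omega⟩
    rw [himg]
    apply Set.ncard_image_of_injective
    intro p q h
    simp only [Prod.mk.injEq] at h
    exact Prod.ext (by omega) (by omega)
  unfold R
  rw [hsplit, hcard, hS2card, hS3card]

theorem repr_recursion (l n : ℕ) (hn : 0 < n) :
    R (Af (l + 1)) n =
      R (Af l) n +
        {p : ℕ × ℕ | p.1 ∈ Af l ∧ p.2 ∈ Bf l ∧ 2 ^ l + (p.1 + p.2) = n}.ncard +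
        {p : ℕ × ℕ | p.1 ∈ Bf l ∧ p.2 ∈ Bf l ∧ p.1 < p.2 ∧
          2 ^ (l + 1) + (p.1 + p.2) = n}.ncard ∧
    R (Bf (l + 1)) n =
      R (Bf l) n +
        {p : ℕ × ℕ | p.1 ∈ Bf l ∧ p.2 ∈ Af l ∧ 2 ^ l + (p.1 + p.2) = n}.ncard +
        {p : ℕ × ℕ | p.1 ∈ Af l ∧ p.2 ∈ Af l ∧ p.1 < p.2 ∧
          2 ^ (l + 1) + (p.1 + p.2) = n}.ncard := by
  constructor
  · rw [Af_succ l]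
    exact key_count l n (Af l) (Bf l) (fun x hx => hx.2) (fun x hx => hx.2)
  · rw [Bf_succ l]
    exact key_count l n (Bf l) (Af l) (fun x hx => hx.2) (fun x hx => hx.2)
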